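/- Let C ∈ ℝ^{m×n} be a nonzero matrix, and let x ∈ ℝⁿ, y ∈ ℝᵐ be vectors such that w := yᵀCx ≠ 0. Then the matrix C₂ := C − w⁻¹·(Cx)(yᵀC) has rank exactly one less than the rank of C. -/

import Mathlib

open Matrix

lemma vecMulVec_mulVec' {m n : ℕ} (u : Fin m → ℝ) (v : Fin n → ℝ) (z : Fin n → ℝ) :
    (Matrix.vecMulVec u v).mulVec z = (v ⬝ᵥ z) • u := by
  funext i
  simp only [mulVec, dotProduct, vecMulVec_apply, Pi.smul_apply, smul_eq_mul,
    Finset.sum_mul]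
  exact Finset.sum_congr rfl fun j _ => by ring

theorem stmt1 {m n : ℕ} (C : Matrix (Fin m) (Fin n) ℝ) (hC : C ≠ 0)
    (x : Fin n → ℝ) (y : Fin m → ℝ) (hw : y ⬝ᵥ C.mulVec x ≠ 0) :
    (C - (y ⬝ᵥ C.mulVec x)⁻¹ • Matrix.vecMulVec (C.mulVec x) (C.vecMul y)).rank + 1
      = C.rank := by
  set w := y ⬝ᵥ C.mulVec x with hwdef
  set u := C.mulVec x with hu
  set D := C - w⁻¹ • Matrix.vecMulVec u (C.vecMul y) with hD
  have hDz : ∀ z, D.mulVec z = C.mulVec z - (w⁻¹ * (y ⬝ᵥ C.mulVec z)) • u := by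
    intro z
    rw [hD, sub_mulVec, smul_mulVec, vecMulVec_mulVec', smul_smul,
      ← dotProduct_mulVec]
  have hyD : ∀ z, y ⬝ᵥ D.mulVec z = 0 := by
    intro z
    rw [hDz z, dotProduct_sub, dotProduct_smul, smul_eq_mul, ← hwdef]
    field_simp
    ring
  have hrange : LinearMap.range C.mulVecLin
      = LinearMap.range D.mulVecLin ⊔ (ℝ ∙ u) := by
    apply le_antisymm
    · rintro v ⟨z, rfl⟩
      have : C.mulVecLin z = D.mulVec z + (w⁻¹ * (y ⬝ᵥ C.mulVec z)) • u := by
        rw [hDz z]; simp [mulVecLin_apply]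
      rw [this]
      exact Submodule.add_mem_sup ⟨z, rfl⟩
        (Submodule.smul_mem _ _ (Submodule.mem_span_singleton_self u))
    · apply sup_le
      · rintro v ⟨z, rfl⟩
        have h1 : D.mulVecLin z
            = C.mulVecLin z - (w⁻¹ * (y ⬝ᵥ C.mulVec z)) • C.mulVecLin x := by
          simp [mulVecLin_apply, hDz z, hu]
        rw [h1]
        exact Submodule.sub_mem _ ⟨z, rfl⟩ (Submodule.smul_mem _ _ ⟨x, rfl⟩)
      · rw [Submodule.span_singleton_le_iff_mem]
        exact ⟨x, rfl⟩
  have hdisj : LinearMap.range D.mulVecLin ⊓ (ℝ ∙ u) = ⊥ := by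
    rw [eq_bot_iff]
    intro v hv
    rw [Submodule.mem_inf] at hv
    obtain ⟨⟨z, rfl⟩, hv2⟩ := hv
    rw [Submodule.mem_span_singleton] at hv2
    obtain ⟨c, hc⟩ := hv2
    have h1 : y ⬝ᵥ D.mulVecLin z = 0 := hyD z
    rw [← hc, dotProduct_smul, smul_eq_mul, ← hwdef] at h1
    rcases mul_eq_zero.mp h1 with h | h
    · simp [← hc, h]
    · exact absurd h hw
  have hu0 : u ≠ 0 := fun h => hw (by rw [hwdef, h, dotProduct_zero])
  have hfr := Submodule.finrank_sup_add_finrank_inf_eq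
    (LinearMap.range D.mulVecLin) (ℝ ∙ u)
  rw [hdisj, finrank_bot, add_zero, finrank_span_singleton hu0] at hfr
  rw [Matrix.rank, Matrix.rank, hrange, ← hfr]
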